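/- The potential Ψ_k = (1+γ)^k·( f_k(y_k) − f* + (μ/2)·‖z_k − x*‖² ) is non-increasing: Ψ_{k+1} − Ψ_k ≤ 0 for every k ≥ 0. -/

import Mathlib

open scoped RealInnerProductSpace

lemma smooth_upper_aux {d : ℕ} {L : ℝ} (hL : 0 < L) (f : EuclideanSpace ℝ (Fin d) → ℝ)
    (g : EuclideanSpace ℝ (Fin d) → EuclideanSpace ℝ (Fin d))
    (hgrad : ∀ x, HasGradientAt f (g x) x)
    (hlip : ∀ a b, ‖g b - g a‖ ≤ L * ‖b - a‖) (x y : EuclideanSpace ℝ (Fin d)) :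
    f y ≤ f x + ⟪g x, y - x⟫ + L / 2 * ‖y - x‖ ^ 2 := by
  set v := y - x with hv
  have hpath : ∀ t : ℝ, HasDerivAt (fun t : ℝ => x + t • v) v t := by
    intro t
    simpa using ((hasDerivAt_id t).smul_const v).const_add x
  have hφ : ∀ t : ℝ, HasDerivAt (fun t => f (x + t • v)) ⟪g (x + t • v), v⟫ t := by
    intro t
    have h1 := ((hgrad (x + t • v)).hasFDerivAt).comp_hasDerivAt t (hpath t)
    simpa [Function.comp_def] using h1
  have hgc : Continuous g := by
    have : LipschitzWith (Real.toNNReal L) g := by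
      apply LipschitzWith.of_dist_le_mul
      intro a b
      simpa [dist_eq_norm, Real.coe_toNNReal L hL.le] using hlip b a
    exact this.continuous
  have hcont : Continuous fun t : ℝ => ⟪g (x + t • v), v⟫ := by
    exact (hgc.comp (continuous_const.add (continuous_id.smul continuous_const))).inner
      continuous_const
  have key : f y - f x = ∫ t in (0:ℝ)..1, ⟪g (x + t • v), v⟫ := by
    have h := intervalIntegral.integral_eq_sub_of_hasDerivAt (a := 0) (b := 1)
      (fun t _ => hφ t) (hcont.intervalIntegrable 0 1)
    rw [h]
    norm_num [hv]
  have hint2 : IntervalIntegrable (fun t : ℝ => ⟪g x, v⟫ + L * t * ‖v‖ ^ 2)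
      MeasureTheory.volume 0 1 :=
    (continuous_const.add ((continuous_const.mul continuous_id).mul continuous_const)).intervalIntegrable 0 1
  have bound : (∫ t in (0:ℝ)..1, ⟪g (x + t • v), v⟫) ≤
      ∫ t in (0:ℝ)..1, (⟪g x, v⟫ + L * t * ‖v‖ ^ 2) := by
    apply intervalIntegral.integral_mono_on (by norm_num) (hcont.intervalIntegrable 0 1) hint2
    intro t ht
    have h1 : ⟪g (x + t • v) - g x, v⟫ ≤ ‖g (x + t • v) - g x‖ * ‖v‖ := real_inner_le_norm _ _
    have h2 : ‖g (x + t • v) - g x‖ ≤ L * ‖t • v‖ := by simpa using hlip x (x + t • v)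
    have h3 : ‖t • v‖ = t * ‖v‖ := by
      rw [norm_smul, Real.norm_eq_abs, abs_of_nonneg ht.1]
    have hin : ⟪g (x + t • v), v⟫ = ⟪g x, v⟫ + ⟪g (x + t • v) - g x, v⟫ := by
      rw [inner_sub_left]; ring
    rw [h3] at h2
    have h4 := mul_le_mul_of_nonneg_right h2 (norm_nonneg v)
    rw [hin]
    nlinarith [h1, h4]
  have val : (∫ t in (0:ℝ)..1, (⟪g x, v⟫ + L * t * ‖v‖ ^ 2)) = ⟪g x, v⟫ + L / 2 * ‖v‖ ^ 2 := by
    have hfe : (fun t : ℝ => ⟪g x, v⟫ + L * t * ‖v‖ ^ 2)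
        = fun t : ℝ => ⟪g x, v⟫ + (L * ‖v‖ ^ 2) * t := by funext t; ring
    have hI : IntervalIntegrable (fun t : ℝ => (L * ‖v‖ ^ 2) * t) MeasureTheory.volume 0 1 :=
      (continuous_const.mul continuous_id).intervalIntegrable 0 1
    rw [hfe, intervalIntegral.integral_add intervalIntegrable_const hI,
      intervalIntegral.integral_const, intervalIntegral.integral_const_mul, integral_id]
    norm_num
    ring
  linarith [key, bound, val.le, val.ge]

lemma norm_combo_sq_le_aux {d : ℕ} (a b : EuclideanSpace ℝ (Fin d)) {θ : ℝ}
    (h0 : 0 ≤ θ) (h1 : θ ≤ 1) :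
    ‖(1 - θ) • a + θ • b‖ ^ 2 ≤ (1 - θ) * ‖a‖ ^ 2 + θ * ‖b‖ ^ 2 := by
  have hab : ⟪a, b⟫ ≤ ‖a‖ * ‖b‖ := real_inner_le_norm a b
  rw [norm_add_sq_real, norm_smul, norm_smul, real_inner_smul_left, real_inner_smul_right,
    Real.norm_eq_abs, Real.norm_eq_abs, abs_of_nonneg h0, abs_of_nonneg (by linarith : (0:ℝ) ≤ 1 - θ)]
  nlinarith [sq_nonneg (‖a‖ - ‖b‖), mul_nonneg h0 (by linarith : (0:ℝ) ≤ 1 - θ), norm_nonneg a, norm_nonneg b]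

set_option maxHeartbeats 1000000 in
/-- For the accelerated Nesterov iteration over a uniformly non-increasing
sequence of `L`-smooth `μ`-strongly convex functions with common minimizer `x*` and
common minimal value `f*`, the potential
`Ψ_k = (1+γ)^k·(f_k(y_k) − f* + (μ/2)‖z_k − x*‖²)` is non-increasing, where
`τ = 1/(√κ+1)`, `γ = 1/(√κ−1)`, `κ = L/μ` and `z_k = (1/τ)x_k − ((1−τ)/τ)y_k`. -/
theorem nesterov_potential_nonincreasing
    {d : ℕ} (L μ : ℝ) (hμ : 0 < μ) (hμL : μ < L)
    (f : ℕ → EuclideanSpace ℝ (Fin d) → ℝ)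
    (g : ℕ → EuclideanSpace ℝ (Fin d) → EuclideanSpace ℝ (Fin d))
    (hgrad : ∀ k x, HasGradientAt (f k) (g k x) x)
    (hsmooth : ∀ k x y, ‖g k y - g k x‖ ≤ L * ‖y - x‖)
    (hstrong : ∀ k x y, f k x + ⟪g k x, y - x⟫ + μ / 2 * ‖y - x‖ ^ 2 ≤ f k y)
    (hmono : ∀ k x, f (k + 1) x ≤ f k x)
    (xstar : EuclideanSpace ℝ (Fin d)) (fstar : ℝ)
    (hmin : ∀ k x, f k xstar ≤ f k x) (hval : ∀ k, f k xstar = fstar)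
    (κ : ℝ) (hκ : κ = L / μ)
    (x0 : EuclideanSpace ℝ (Fin d)) (x y : ℕ → EuclideanSpace ℝ (Fin d))
    (hx0 : x 0 = x0) (hy0 : y 0 = x0)
    (hyup : ∀ k, y (k + 1) = x k - (1 / L) • g k (x k))
    (hxup : ∀ k, x (k + 1) =
      (1 + (Real.sqrt κ - 1) / (Real.sqrt κ + 1)) • y (k + 1)
        - ((Real.sqrt κ - 1) / (Real.sqrt κ + 1)) • y k)
    (τ γ : ℝ) (hτ : τ = 1 / (Real.sqrt κ + 1)) (hγ : γ = 1 / (Real.sqrt κ - 1))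
    (z : ℕ → EuclideanSpace ℝ (Fin d))
    (hz : ∀ k, z k = (1 / τ) • x k - ((1 - τ) / τ) • y k)
    (Ψ : ℕ → ℝ)
    (hΨ : ∀ k, Ψ k = (1 + γ) ^ k * (f k (y k) - fstar + μ / 2 * ‖z k - xstar‖ ^ 2)) :
    ∀ k : ℕ, Ψ (k + 1) - Ψ k ≤ 0 := by
  intro k
  set s := Real.sqrt κ with hsdef
  have hκ1 : 1 < κ := by rw [hκ, lt_div_iff₀ hμ]; linarith
  have hκ0 : 0 < κ := by linarith
  have hs1 : 1 < s := by
    rw [hsdef]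
    exact (Real.lt_sqrt (by norm_num)).mpr (by nlinarith)
  have hs0 : 0 < s := by linarith
  have hss : s * s = κ := Real.mul_self_sqrt hκ0.le
  have hL0 : 0 < L := lt_trans hμ hμL
  have hLs : L = μ * (s * s) := by rw [hss, hκ]; field_simp
  have hne1 : s + 1 ≠ 0 := by positivity
  have hne2 : s ≠ 0 := hs0.ne'
  have hne3 : s - 1 ≠ 0 := by
    intro h; rw [sub_eq_zero] at h; exact absurd h.symm hs1.ne
  have hne4 : L ≠ 0 := hL0.ne'
  have hne5 : μ ≠ 0 := hμ.ne'
  set θ : ℝ := 1 / s with hθdef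
  have hθ0 : 0 < θ := by rw [hθdef]; positivity
  have hθ1 : θ < 1 := by rw [hθdef]; rw [div_lt_one hs0]; exact hs1
  set G := g k (x k) with hG
  -- vector identities
  have hzx : z k = (s + 1) • x k - s • y k := by
    rw [hz k, hτ]
    match_scalars <;> (field_simp; try ring)
  have hz1 : z (k + 1) = s • y (k + 1) - (s - 1) • y k := by
    rw [hz (k + 1), hxup k, hτ]
    match_scalars <;> (field_simp; try ring)
  have hz2 : z (k + 1) - xstar =
      ((1 - θ) • (z k - xstar) + θ • (x k - xstar)) - (θ / μ) • G := by
    rw [hz1, hyup k, hzx, hθdef, hLs]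
    match_scalars <;> (field_simp; try ring)
  have hWid : (1 - θ) • (z k - xstar) + θ • (x k - xstar)
      = (s - 1) • (x k - y k) + (x k - xstar) := by
    rw [hzx, hθdef]
    match_scalars <;> (field_simp; try ring)
  -- scalar abbreviations
  set nG := ‖G‖ ^ 2 with hnG
  set nZ := ‖z k - xstar‖ ^ 2 with hnZ
  set nZ1 := ‖z (k + 1) - xstar‖ ^ 2 with hnZ1
  set nX := ‖x k - xstar‖ ^ 2 with hnX
  set Q1 : ℝ := ⟪G, x k - y k⟫ with hQ1
  set Q2 : ℝ := ⟪G, x k - xstar⟫ with hQ2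
  -- E1 : descent step
  have E1 : f k (y (k + 1)) ≤ f k (x k) - θ ^ 2 / (2 * μ) * nG := by
    have hsu := smooth_upper_aux hL0 (f k) (g k) (hgrad k) (hsmooth k) (x k) (y (k + 1))
    have hd : y (k + 1) - x k = -((1 / L) • G) := by rw [hyup k]; abel
    rw [hd, inner_neg_right, real_inner_smul_right, real_inner_self_eq_norm_sq,
      norm_neg, norm_smul, Real.norm_eq_abs, abs_of_pos (by positivity : (0:ℝ) < 1 / L)] at hsu
    have hc : f k (x k) + -(1 / L * nG) + L / 2 * (1 / L * ‖G‖) ^ 2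
        = f k (x k) - θ ^ 2 / (2 * μ) * nG := by
      rw [hθdef, hLs, hnG]; field_simp; ring
    rw [hnG] at hc ⊢
    linarith [hsu, hc.le, hc.ge]
  -- E2 : strong convexity toward y k
  have E2 : f k (x k) - Q1 ≤ f k (y k) := by
    have h := hstrong k (x k) (y k)
    have hi : ⟪G, y k - x k⟫ = -Q1 := by
      rw [hQ1, ← inner_neg_right]
      congr 1
      abel
    rw [hi] at h
    have hnn : 0 ≤ μ / 2 * ‖y k - x k‖ ^ 2 := by positivity
    linarith
  -- E3 : strong convexity toward xstar
  have E3 : f k (x k) - Q2 + μ / 2 * nX ≤ fstar := by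
    have h := hstrong k (x k) xstar
    have hi : ⟪G, xstar - x k⟫ = -Q2 := by
      rw [hQ2, ← inner_neg_right]
      congr 1
      abel
    rw [hi, hval k, norm_sub_rev, ← hnX] at h
    linarith
  -- E4 : distance recursion
  have E4 : nZ1 ≤ (1 - θ) * nZ + θ * nX
      - 2 * ((θ / μ) * ((s - 1) * Q1 + Q2)) + (θ / μ) ^ 2 * nG := by
    have hWn : ‖(1 - θ) • (z k - xstar) + θ • (x k - xstar)‖ ^ 2 ≤ (1 - θ) * nZ + θ * nX :=
      norm_combo_sq_le_aux _ _ hθ0.le hθ1.le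
    have hinW : ⟪(1 - θ) • (z k - xstar) + θ • (x k - xstar), (θ / μ) • G⟫
        = (θ / μ) * ((s - 1) * Q1 + Q2) := by
      rw [hWid, real_inner_smul_right, inner_add_left, real_inner_smul_left,
        hQ1, hQ2, real_inner_comm G (x k - y k), real_inner_comm G (x k - xstar)]
    have hun : ‖(θ / μ) • G‖ ^ 2 = (θ / μ) ^ 2 * nG := by
      rw [norm_smul, Real.norm_eq_abs, abs_of_pos (by positivity : (0:ℝ) < θ / μ), mul_pow, hnG]
    calc nZ1 = ‖((1 - θ) • (z k - xstar) + θ • (x k - xstar)) - (θ / μ) • G‖ ^ 2 := by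
          rw [hnZ1, hz2]
      _ = ‖(1 - θ) • (z k - xstar) + θ • (x k - xstar)‖ ^ 2
            - 2 * ⟪(1 - θ) • (z k - xstar) + θ • (x k - xstar), (θ / μ) • G⟫
            + ‖(θ / μ) • G‖ ^ 2 := norm_sub_sq_real _ _
      _ ≤ (1 - θ) * nZ + θ * nX - 2 * ((θ / μ) * ((s - 1) * Q1 + Q2)) + (θ / μ) ^ 2 * nG := by
          rw [hinW, hun]; linarith
  have E4' : μ / 2 * nZ1 ≤ (1 - θ) * (μ / 2) * nZ + θ * (μ / 2) * nX
      - ((1 - θ) * Q1 + θ * Q2) + θ ^ 2 / (2 * μ) * nG := by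
    have h := mul_le_mul_of_nonneg_left E4 (by positivity : (0:ℝ) ≤ μ / 2)
    have hexp : μ / 2 * ((1 - θ) * nZ + θ * nX
        - 2 * ((θ / μ) * ((s - 1) * Q1 + Q2)) + (θ / μ) ^ 2 * nG)
        = (1 - θ) * (μ / 2) * nZ + θ * (μ / 2) * nX
          - ((1 - θ) * Q1 + θ * Q2) + θ ^ 2 / (2 * μ) * nG := by
      rw [hθdef]; field_simp
    linarith [h, hexp.le, hexp.ge]
  have E2' : (1 - θ) * (f k (x k) - Q1) ≤ (1 - θ) * f k (y k) :=
    mul_le_mul_of_nonneg_left E2 (by linarith)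
  have E3' : θ * (f k (x k) - Q2 + μ / 2 * nX) ≤ θ * fstar :=
    mul_le_mul_of_nonneg_left E3 hθ0.le
  have step : f k (y (k + 1)) - fstar + μ / 2 * nZ1
      ≤ (1 - θ) * (f k (y k) - fstar + μ / 2 * nZ) := by
    nlinarith [E1, E2', E3', E4']
  have Sstep : f (k + 1) (y (k + 1)) - fstar + μ / 2 * ‖z (k + 1) - xstar‖ ^ 2
      ≤ (1 - θ) * (f k (y k) - fstar + μ / 2 * ‖z k - xstar‖ ^ 2) := by
    have hm := hmono k (y (k + 1))
    rw [← hnZ1, ← hnZ]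
    linarith [step]
  have hγ0 : 0 < 1 + γ := by
    rw [hγ]
    have : 0 < 1 / (s - 1) := div_pos one_pos (by linarith)
    linarith
  have hpow : (0:ℝ) ≤ (1 + γ) ^ (k + 1) := by positivity
  have h1 : (1 + γ) * (1 - θ) = 1 := by
    rw [hγ, hθdef]; field_simp; ring
  have hmul := mul_le_mul_of_nonneg_left Sstep hpow
  have hre : (1 + γ) ^ (k + 1) * ((1 - θ) * (f k (y k) - fstar + μ / 2 * ‖z k - xstar‖ ^ 2))
      = (1 + γ) ^ k * (f k (y k) - fstar + μ / 2 * ‖z k - xstar‖ ^ 2) := by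
    rw [pow_succ, mul_assoc, ← mul_assoc (1 + γ), h1, one_mul]
  rw [hΨ (k + 1), hΨ k]
  linarith [hmul, hre.le, hre.ge]
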